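/- For every B ≥ R(σ2²+σ1²)/(σ2²−σ1²): max_{|z| ≤ B} |h̆(z)| ≥ (c1 B − c2 R) · exp(−(B+R)²/(2σ1²))/√(2πσ1²), where c1 = 1 − σ1²/σ2² and c2 = 1 + σ1²/σ2²; in particular the left-hand side is strictly positive whenever B > R(σ2²+σ1²)/(σ2²−σ1²). -/

import Mathlib

open MeasureTheory Real Filter

noncomputable section

/-- The real `N(0,σ²)` density `φ_σ`. -/
def phiR (σ u : ℝ) : ℝ := (Real.sqrt (2 * π * σ ^ 2))⁻¹ * Real.exp (-u ^ 2 / (2 * σ ^ 2))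

/-- Complex extension of the Gaussian density `φ_σ`. -/
def phiC (σ : ℝ) (z : ℂ) : ℂ :=
  ((Real.sqrt (2 * π * σ ^ 2) : ℝ) : ℂ)⁻¹ * Complex.exp (-z ^ 2 / (2 * (σ : ℂ) ^ 2))

/-- The entire function `F_i(z) = E[φ_{σ_i}(z − X)]`, with `X ∼ μ`. -/
def Fdens (σ : ℝ) (μ : Measure ℝ) (z : ℂ) : ℂ := ∫ x : ℝ, phiC σ (z - (x : ℂ)) ∂μ

/-- The complex extension `h̆` of the function `h = σ1² f_{Y₁} g'`:
`h̆(z) = σ1² F₁(z)·E[N Log F₂(z+N)]/(σ2²−σ1²) − E[X φ_{σ1}(z−X)] + z F₁(z)`,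
with `N ∼ N(0,σ2²−σ1²)` written out as an integral against its density. -/
def hbreve (σ1 σ2 : ℝ) (μ : Measure ℝ) (z : ℂ) : ℂ :=
  ((σ1 : ℂ) ^ 2 * Fdens σ1 μ z *
      ∫ t : ℝ, (t : ℂ) * Complex.log (Fdens σ2 μ (z + (t : ℂ))) *
        ((phiR (Real.sqrt (σ2 ^ 2 - σ1 ^ 2)) t : ℝ) : ℂ)) /
    ((σ2 : ℂ) ^ 2 - (σ1 : ℂ) ^ 2)
  - (∫ x : ℝ, (x : ℂ) * phiC σ1 (z - (x : ℂ)) ∂μ) + z * Fdens σ1 μ z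

end

lemma phiR_pos {σ : ℝ} (hσ : 0 < σ) (u : ℝ) : 0 < phiR σ u := by
  unfold phiR; positivity

lemma phiR_anti {σ : ℝ} (hσ : 0 < σ) {u v : ℝ} (h : u ^ 2 ≤ v ^ 2) : phiR σ v ≤ phiR σ u := by
  unfold phiR
  gcongr

lemma phiR_le_max {σ : ℝ} (hσ : 0 < σ) (u : ℝ) : phiR σ u ≤ (Real.sqrt (2 * π * σ ^ 2))⁻¹ := by
  unfold phiR
  nth_rewrite 2 [← mul_one (Real.sqrt (2 * π * σ ^ 2))⁻¹]
  gcongr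
  rw [Real.exp_le_one_iff]
  have h2 : (0:ℝ) ≤ 2 * σ ^ 2 := by positivity
  exact div_nonpos_of_nonpos_of_nonneg (neg_nonpos.mpr (sq_nonneg u)) h2

lemma phiC_ofReal (σ r : ℝ) : phiC σ (r : ℂ) = ((phiR σ r : ℝ) : ℂ) := by
  unfold phiC phiR
  push_cast
  ring_nf

lemma phiR_even (σ u : ℝ) : phiR σ (-u) = phiR σ u := by unfold phiR; rw [neg_pow]; ring_nf

lemma phiR_continuous (σ : ℝ) : Continuous (phiR σ) := by
  unfold phiR; fun_prop

section Fprops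

variable {σ R : ℝ} {μ : Measure ℝ}

lemma integrable_phiR_shift (hσ : 0 < σ) (μ : Measure ℝ) [IsProbabilityMeasure μ] (b : ℝ) :
    Integrable (fun x => phiR σ (b - x)) μ := by
  refine Integrable.mono' (integrable_const ((Real.sqrt (2 * π * σ ^ 2))⁻¹)) ?_ ?_
  · exact ((phiR_continuous σ).comp (continuous_const.sub continuous_id)).aestronglyMeasurable
  · refine Eventually.of_forall fun x => ?_
    rw [Real.norm_eq_abs, abs_of_pos (phiR_pos hσ _)]
    exact phiR_le_max hσ _

lemma integrable_mul_phiR_shift (hσ : 0 < σ) (μ : Measure ℝ) [IsProbabilityMeasure μ]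
    (hsupp : ∀ᵐ x ∂μ, |x| ≤ R) (b : ℝ) :
    Integrable (fun x => x * phiR σ (b - x)) μ := by
  refine Integrable.mono' (integrable_const (R * (Real.sqrt (2 * π * σ ^ 2))⁻¹)) ?_ ?_
  · exact (continuous_id.mul ((phiR_continuous σ).comp
      (continuous_const.sub continuous_id))).aestronglyMeasurable
  · filter_upwards [hsupp] with x hx
    rw [Real.norm_eq_abs, abs_mul, abs_of_pos (phiR_pos hσ _)]
    have h0 : (0:ℝ) ≤ |x| := abs_nonneg x
    exact mul_le_mul hx (phiR_le_max hσ _) (phiR_pos hσ _).le ((h0.trans hx).trans_eq rfl)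

lemma F_lower (hσ : 0 < σ) [IsProbabilityMeasure μ] (hR : 0 ≤ R)
    (hsupp : ∀ᵐ x ∂μ, |x| ≤ R) (b : ℝ) :
    phiR σ (|b| + R) ≤ ∫ x, phiR σ (b - x) ∂μ := by
  have : phiR σ (|b| + R) = ∫ _x, phiR σ (|b| + R) ∂μ := by
    rw [integral_const]; simp
  rw [this]
  refine integral_mono_ae (integrable_const _) (integrable_phiR_shift hσ μ b) ?_
  filter_upwards [hsupp] with x hx
  refine phiR_anti hσ ?_
  rw [← sq_abs (b - x), ← sq_abs (|b| + R)]
  have h1 : |b - x| ≤ |b| + R := (abs_sub _ _).trans (by gcongr)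
  have h2 : |(|b| + R)| = |b| + R := abs_of_nonneg (by positivity)
  rw [h2]
  exact pow_le_pow_left₀ (abs_nonneg _) h1 2

lemma F_pos (hσ : 0 < σ) [IsProbabilityMeasure μ] (hR : 0 ≤ R)
    (hsupp : ∀ᵐ x ∂μ, |x| ≤ R) (b : ℝ) : 0 < ∫ x, phiR σ (b - x) ∂μ :=
  lt_of_lt_of_le (phiR_pos hσ _) (F_lower hσ hR hsupp b)

lemma F_upper (hσ : 0 < σ) [IsProbabilityMeasure μ] (b : ℝ) :
    ∫ x, phiR σ (b - x) ∂μ ≤ (Real.sqrt (2 * π * σ ^ 2))⁻¹ := by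
  have : ((Real.sqrt (2 * π * σ ^ 2))⁻¹ : ℝ) = ∫ _x, (Real.sqrt (2 * π * σ ^ 2))⁻¹ ∂μ := by
    rw [integral_const]; simp
  rw [this]
  exact integral_mono_ae (integrable_phiR_shift hσ μ b) (integrable_const _)
    (Eventually.of_forall fun x => phiR_le_max hσ _)

lemma Fdens_ofReal (σ : ℝ) (μ : Measure ℝ) (b : ℝ) :
    Fdens σ μ (b : ℂ) = ((∫ x, phiR σ (b - x) ∂μ : ℝ) : ℂ) := by
  unfold Fdens
  have h : ∀ x : ℝ, phiC σ ((b:ℂ) - (x:ℂ)) = ((phiR σ (b - x) : ℝ) : ℂ) := fun x => by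
    rw [← Complex.ofReal_sub, phiC_ofReal]
  simp_rw [h]
  exact integral_ofReal

end Fprops

section Deriv

variable {σ R : ℝ} {μ : Measure ℝ}

lemma hasDerivAt_phiR_shift (hσ : 0 < σ) (x y : ℝ) :
    HasDerivAt (fun b => phiR σ (b - x)) ((x - y) / σ ^ 2 * phiR σ (y - x)) y := by
  have h1 : HasDerivAt (fun b : ℝ => -(b - x) ^ 2 / (2 * σ ^ 2))
      (-(2 * (y - x)) / (2 * σ ^ 2)) y := by
    have := (((hasDerivAt_id y).sub_const x).pow 2).neg.div_const (2 * σ ^ 2)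
    simpa using this
  have h2 := (h1.exp).const_mul ((Real.sqrt (2 * π * σ ^ 2))⁻¹)
  have h3 : HasDerivAt (fun b => phiR σ (b - x))
      ((Real.sqrt (2 * π * σ ^ 2))⁻¹ * (Real.exp (-(y - x) ^ 2 / (2 * σ ^ 2)) *
        (-(2 * (y - x)) / (2 * σ ^ 2)))) y := h2
  convert h3 using 1
  unfold phiR
  have hσ2 : σ ^ 2 ≠ 0 := by positivity
  field_simp
  ring

lemma integrable_deriv_integrand (hσ : 0 < σ) (μ : Measure ℝ) [IsProbabilityMeasure μ]
    (hsupp : ∀ᵐ x ∂μ, |x| ≤ R) (hR : 0 ≤ R) (y : ℝ) :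
    Integrable (fun x => (x - y) / σ ^ 2 * phiR σ (y - x)) μ := by
  refine Integrable.mono'
    (integrable_const ((R + |y|) / σ ^ 2 * (Real.sqrt (2 * π * σ ^ 2))⁻¹)) ?_ ?_
  · exact (((continuous_id.sub continuous_const).div_const _).mul
      ((phiR_continuous σ).comp (continuous_const.sub continuous_id))).aestronglyMeasurable
  · filter_upwards [hsupp] with x hx
    rw [Real.norm_eq_abs, abs_mul]
    have h1 : |(x - y) / σ ^ 2| ≤ (R + |y|) / σ ^ 2 := by
      rw [abs_div, abs_of_pos (by positivity : (0:ℝ) < σ ^ 2)]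
      apply div_le_div_of_nonneg_right ?_ (by positivity) |>.trans_eq rfl
      exact (abs_sub _ _).trans (by gcongr)
    rw [abs_of_pos (phiR_pos hσ _)]
    exact mul_le_mul h1 (phiR_le_max hσ _) (phiR_pos hσ _).le (by positivity)

lemma hasDerivAt_F (hσ : 0 < σ) (μ : Measure ℝ) [IsProbabilityMeasure μ]
    (hsupp : ∀ᵐ x ∂μ, |x| ≤ R) (hR : 0 ≤ R) (y : ℝ) :
    HasDerivAt (fun b => ∫ x, phiR σ (b - x) ∂μ)
      (∫ x, (x - y) / σ ^ 2 * phiR σ (y - x) ∂μ) y := by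
  have key := hasDerivAt_integral_of_dominated_loc_of_deriv_le (F := fun b x => phiR σ (b - x))
    (F' := fun b x => (x - b) / σ ^ 2 * phiR σ (b - x))
    (bound := fun _ => (R + |y| + 1) / σ ^ 2 * (Real.sqrt (2 * π * σ ^ 2))⁻¹)
    (x₀ := y) (μ := μ) (Metric.ball_mem_nhds y one_pos)
    (Eventually.of_forall fun b =>
      ((phiR_continuous σ).comp (continuous_const.sub continuous_id)).aestronglyMeasurable)
    (integrable_phiR_shift hσ μ y)
    ((((continuous_id.sub continuous_const).div_const _).mul
      ((phiR_continuous σ).comp (continuous_const.sub continuous_id))).aestronglyMeasurable)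
    ?_ (integrable_const _) ?_
  · exact key.2
  · filter_upwards [hsupp] with x hx b hb
    rw [Real.norm_eq_abs, abs_mul, abs_of_pos (phiR_pos hσ _)]
    have hb' : |b| ≤ |y| + 1 := by
      have := mem_ball_iff_norm.mp hb
      rw [Real.norm_eq_abs] at this
      calc |b| = |y + (b - y)| := by ring_nf
        _ ≤ |y| + |b - y| := abs_add_le _ _
        _ ≤ |y| + 1 := by linarith
    have h1 : |(x - b) / σ ^ 2| ≤ (R + |y| + 1) / σ ^ 2 := by
      rw [abs_div, abs_of_pos (by positivity : (0:ℝ) < σ ^ 2)]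
      apply div_le_div_of_nonneg_right ?_ (by positivity) |>.trans_eq rfl
      calc |x - b| ≤ |x| + |b| := abs_sub _ _
        _ ≤ R + (|y| + 1) := add_le_add hx hb'
        _ = R + |y| + 1 := by ring
    exact mul_le_mul h1 (phiR_le_max hσ _) (phiR_pos hσ _).le (by positivity)
  · refine Eventually.of_forall fun x b _ => ?_
    exact hasDerivAt_phiR_shift hσ x b

end Deriv

section LogDeriv

variable {σ R : ℝ} {μ : Measure ℝ}

lemma hasDerivAt_logF (hσ : 0 < σ) (μ : Measure ℝ) [IsProbabilityMeasure μ]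
    (hsupp : ∀ᵐ x ∂μ, |x| ≤ R) (hR : 0 ≤ R) (y : ℝ) :
    HasDerivAt (fun b => Real.log (∫ x, phiR σ (b - x) ∂μ))
      ((∫ x, (x - y) / σ ^ 2 * phiR σ (y - x) ∂μ) / (∫ x, phiR σ (y - x) ∂μ)) y :=
  (hasDerivAt_F hσ μ hsupp hR y).log (F_pos hσ hR hsupp y).ne'

lemma logF_deriv_lower (hσ : 0 < σ) (μ : Measure ℝ) [IsProbabilityMeasure μ]
    (hsupp : ∀ᵐ x ∂μ, |x| ≤ R) (hR : 0 ≤ R) (y : ℝ) :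
    -(y + R) / σ ^ 2 ≤
      (∫ x, (x - y) / σ ^ 2 * phiR σ (y - x) ∂μ) / (∫ x, phiR σ (y - x) ∂μ) := by
  rw [le_div_iff₀ (F_pos hσ hR hsupp y)]
  rw [← integral_const_mul]
  refine integral_mono_ae ((integrable_phiR_shift hσ μ y).const_mul _)
    (integrable_deriv_integrand hσ μ hsupp hR y) ?_
  filter_upwards [hsupp] with x hx
  have h1 : -(y + R) / σ ^ 2 ≤ (x - y) / σ ^ 2 := by
    apply div_le_div_of_nonneg_right ?_ (by positivity) |>.trans_eq rfl
    have := abs_le.mp hx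
    linarith [this.1]
  exact mul_le_mul_of_nonneg_right h1 (phiR_pos hσ _).le

lemma logF_deriv_abs_le (hσ : 0 < σ) (μ : Measure ℝ) [IsProbabilityMeasure μ]
    (hsupp : ∀ᵐ x ∂μ, |x| ≤ R) (hR : 0 ≤ R) (y : ℝ) :
    |(∫ x, (x - y) / σ ^ 2 * phiR σ (y - x) ∂μ) / (∫ x, phiR σ (y - x) ∂μ)|
      ≤ (R + |y|) / σ ^ 2 := by
  have hF := F_pos hσ hR hsupp y
  rw [abs_div, abs_of_pos hF, div_le_iff₀ hF]
  calc |∫ x, (x - y) / σ ^ 2 * phiR σ (y - x) ∂μ|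
      ≤ ∫ x, ‖(x - y) / σ ^ 2 * phiR σ (y - x)‖ ∂μ := by
        rw [← Real.norm_eq_abs]; exact norm_integral_le_integral_norm _
    _ ≤ ∫ x, (R + |y|) / σ ^ 2 * phiR σ (y - x) ∂μ := by
        refine integral_mono_ae (integrable_deriv_integrand hσ μ hsupp hR y).norm
          ((integrable_phiR_shift hσ μ y).const_mul _) ?_
        filter_upwards [hsupp] with x hx
        rw [Real.norm_eq_abs, abs_mul, abs_of_pos (phiR_pos hσ _)]
        refine mul_le_mul_of_nonneg_right ?_ (phiR_pos hσ _).le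
        rw [abs_div, abs_of_pos (by positivity : (0:ℝ) < σ ^ 2)]
        apply div_le_div_of_nonneg_right ?_ (by positivity) |>.trans_eq rfl
        exact (abs_sub _ _).trans (by gcongr)
    _ = (R + |y|) / σ ^ 2 * ∫ x, phiR σ (y - x) ∂μ := integral_const_mul _ _

lemma logF_diff_lower (hσ : 0 < σ) (μ : Measure ℝ) [IsProbabilityMeasure μ]
    (hsupp : ∀ᵐ x ∂μ, |x| ≤ R) (hR : 0 ≤ R) {B t : ℝ} (ht : 0 ≤ t) :
    -(2 * t * (B + R)) / σ ^ 2 ≤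
      Real.log (∫ x, phiR σ (B + t - x) ∂μ) - Real.log (∫ x, phiR σ (B - t - x) ∂μ) := by
  set D : ℝ → ℝ := fun y =>
    (∫ x, (x - y) / σ ^ 2 * phiR σ (y - x) ∂μ) / (∫ x, phiR σ (y - x) ∂μ) with hD
  have hDmeas : StronglyMeasurable D := by
    have : D = deriv (fun b => Real.log (∫ x, phiR σ (b - x) ∂μ)) := by
      funext y
      exact ((hasDerivAt_logF hσ μ hsupp hR y).deriv).symm
    rw [this]
    exact (measurable_deriv _).stronglyMeasurable
  have hab : B - t ≤ B + t := by linarith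
  have hint : IntervalIntegrable D volume (B - t) (B + t) := by
    have C0 : (0:ℝ) ≤ (R + (|B - t| + |B + t|)) / σ ^ 2 := by positivity
    refine (intervalIntegrable_const (c := (R + (|B - t| + |B + t|)) / σ ^ 2)).mono_fun
      hDmeas.aestronglyMeasurable.restrict ?_
    filter_upwards [ae_restrict_mem measurableSet_uIoc] with y hy
    rw [Real.norm_eq_abs, Real.norm_eq_abs, abs_of_nonneg C0]
    refine (logF_deriv_abs_le hσ μ hsupp hR y).trans ?_
    have h1 : |y| ≤ |B - t| + |B + t| := by
      have h2 := hy.1.le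
      have h3 := hy.2
      rcases le_total (B - t) (B + t) with h | h
      · rw [min_eq_left h] at h2; rw [max_eq_right h] at h3
        cases abs_cases (B - t) with
        | inl hc => cases abs_cases (B + t) with
          | inl hc2 => rw [abs_le]; constructor <;> linarith [abs_nonneg (B-t), abs_nonneg (B+t)]
          | inr hc2 => rw [abs_le]; constructor <;> linarith [abs_nonneg (B-t), abs_nonneg (B+t)]
        | inr hc => cases abs_cases (B + t) with
          | inl hc2 => rw [abs_le]; constructor <;> linarith [abs_nonneg (B-t), abs_nonneg (B+t)]
          | inr hc2 => rw [abs_le]; constructor <;> linarith [abs_nonneg (B-t), abs_nonneg (B+t)]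
      · rw [min_eq_right h] at h2; rw [max_eq_left h] at h3
        cases abs_cases (B - t) with
        | inl hc => cases abs_cases (B + t) with
          | inl hc2 => rw [abs_le]; constructor <;> linarith [abs_nonneg (B-t), abs_nonneg (B+t)]
          | inr hc2 => rw [abs_le]; constructor <;> linarith [abs_nonneg (B-t), abs_nonneg (B+t)]
        | inr hc => cases abs_cases (B + t) with
          | inl hc2 => rw [abs_le]; constructor <;> linarith [abs_nonneg (B-t), abs_nonneg (B+t)]
          | inr hc2 => rw [abs_le]; constructor <;> linarith [abs_nonneg (B-t), abs_nonneg (B+t)]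
    gcongr
  have hftc : Real.log (∫ x, phiR σ (B + t - x) ∂μ) - Real.log (∫ x, phiR σ (B - t - x) ∂μ)
      = ∫ y in (B - t)..(B + t), D y :=
    (intervalIntegral.integral_eq_sub_of_hasDerivAt
      (fun y _ => hasDerivAt_logF hσ μ hsupp hR y) hint).symm
  rw [hftc]
  have hlin : IntervalIntegrable (fun y => -(y + R) / σ ^ 2) volume (B - t) (B + t) := by
    apply Continuous.intervalIntegrable
    fun_prop
  have hmono : ∫ y in (B - t)..(B + t), -(y + R) / σ ^ 2 ≤ ∫ y in (B - t)..(B + t), D y := by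
    refine intervalIntegral.integral_mono_on hab hlin (hint) ?_
    intro y _
    exact logF_deriv_lower hσ μ hsupp hR y
  refine le_trans (le_of_eq ?_) hmono
  have : (fun y : ℝ => -(y + R) / σ ^ 2) = fun y => (-1 / σ ^ 2) * y + (-R / σ ^ 2) := by
    funext y; field_simp; ring
  rw [this]
  rw [intervalIntegral.integral_add ((by fun_prop : Continuous fun y : ℝ => -1 / σ ^ 2 * y).intervalIntegrable _ _)
    (intervalIntegrable_const), intervalIntegral.integral_const_mul]
  simp only [integral_id, intervalIntegral.integral_const, smul_eq_mul]
  field_simp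
  ring

end LogDeriv

section Gauss

lemma phiR_eq (s : ℝ) (hs : 0 < s) :
    phiR s = fun t => (Real.sqrt (2 * π * s ^ 2))⁻¹ * Real.exp (-(2 * s ^ 2)⁻¹ * t ^ 2) := by
  funext t
  unfold phiR
  congr 1
  rw [neg_div, div_eq_inv_mul, ← neg_mul]

lemma phi_integrable {s : ℝ} (hs : 0 < s) : Integrable (phiR s) := by
  rw [phiR_eq s hs]
  exact (integrable_exp_neg_mul_sq (by positivity)).const_mul _

lemma integrableOn_sq_phi {s : ℝ} (hs : 0 < s) :
    IntegrableOn (fun t => t ^ 2 * phiR s t) (Set.Ioi 0) := by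
  rw [phiR_eq s hs]
  have h := (integrableOn_rpow_mul_exp_neg_mul_sq (b := (2 * s ^ 2)⁻¹) (by positivity)
    (s := 2) (by norm_num)).const_mul ((Real.sqrt (2 * π * s ^ 2))⁻¹)
  refine IntegrableOn.congr_fun h (fun t ht => ?_) measurableSet_Ioi
  rw [Real.rpow_two]
  ring

lemma int_Ioi_phi {s : ℝ} (hs : 0 < s) : ∫ t in Set.Ioi (0:ℝ), phiR s t = 1 / 2 := by
  rw [phiR_eq s hs]
  rw [integral_const_mul, integral_gaussian_Ioi]
  have h1 : π / (2 * s ^ 2)⁻¹ = 2 * π * s ^ 2 := by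
    field_simp
  rw [h1]
  have h2 : (0:ℝ) < Real.sqrt (2 * π * s ^ 2) := Real.sqrt_pos.mpr (by positivity)
  field_simp

lemma tendsto_mul_phi_atTop {s : ℝ} (hs : 0 < s) :
    Tendsto (fun t => t * phiR s t) atTop (nhds 0) := by
  rw [phiR_eq s hs]
  have hb : (0:ℝ) < (2 * s ^ 2)⁻¹ := by positivity
  have h1 := (rpow_mul_exp_neg_mul_sq_isLittleO_exp_neg hb 1).tendsto_zero_of_tendsto
    (tendsto_exp_neg_atTop_nhds_zero.comp
      (tendsto_id.atTop_mul_const (by norm_num : (0:ℝ) < 1/2)) |>.congr fun x => by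
        simp [neg_mul, mul_comm])
  have h2 : Tendsto (fun t : ℝ => t * Real.exp (-(2 * s ^ 2)⁻¹ * t ^ 2)) atTop (nhds 0) := by
    refine h1.congr' ?_
    filter_upwards [eventually_gt_atTop (0:ℝ)] with t ht
    rw [Real.rpow_one]
  have := h2.const_mul ((Real.sqrt (2 * π * s ^ 2))⁻¹)
  rw [mul_zero] at this
  refine this.congr fun t => by ring

lemma int_Ioi_sq_phi {s : ℝ} (hs : 0 < s) :
    ∫ t in Set.Ioi (0:ℝ), t ^ 2 * phiR s t = s ^ 2 / 2 := by
  have hd : ∀ y : ℝ, HasDerivAt (fun t => t * phiR s t)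
      (phiR s y - y ^ 2 / s ^ 2 * phiR s y) y := by
    intro y
    have h1 : HasDerivAt (fun b : ℝ => phiR s (b - 0)) ((0 - y) / s ^ 2 * phiR s (y - 0)) y :=
      hasDerivAt_phiR_shift hs 0 y
    simp only [sub_zero, zero_sub] at h1
    have h2 := (hasDerivAt_id y).mul h1
    refine h2.congr_deriv ?_
    simp only [id_eq]; ring
  have hint : IntegrableOn (fun y => phiR s y - y ^ 2 / s ^ 2 * phiR s y) (Set.Ioi 0) := by
    refine ((phi_integrable hs).integrableOn).sub ?_
    have := (integrableOn_sq_phi hs).div_const (s ^ 2)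
    refine IntegrableOn.congr_fun this (fun t _ => ?_) measurableSet_Ioi
    ring
  have key := integral_Ioi_of_hasDerivAt_of_tendsto
    (f := fun t => t * phiR s t) (a := 0)
    (hd 0).continuousAt.continuousWithinAt (fun y _ => hd y) hint (tendsto_mul_phi_atTop hs)
  simp only [zero_mul, sub_zero] at key
  have hsplit : ∫ y in Set.Ioi (0:ℝ), (phiR s y - y ^ 2 / s ^ 2 * phiR s y)
      = (∫ y in Set.Ioi (0:ℝ), phiR s y) - ∫ y in Set.Ioi (0:ℝ), y ^ 2 / s ^ 2 * phiR s y :=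
    integral_sub ((phi_integrable hs).integrableOn) (by
      have := (integrableOn_sq_phi hs).div_const (s ^ 2)
      refine IntegrableOn.congr_fun this (fun t _ => ?_) measurableSet_Ioi
      ring)
  rw [hsplit, int_Ioi_phi hs] at key
  have h3 : ∫ y in Set.Ioi (0:ℝ), y ^ 2 / s ^ 2 * phiR s y
      = (s ^ 2)⁻¹ * ∫ y in Set.Ioi (0:ℝ), y ^ 2 * phiR s y := by
    rw [← integral_const_mul]
    congr 1; funext y; ring
  rw [h3] at key
  have hs2 : (s:ℝ) ^ 2 ≠ 0 := by positivity
  field_simp at key ⊢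
  linarith

end Gauss

section Icore

variable {σ2 R : ℝ} {μ : Measure ℝ}

lemma integrable_pow_phi {s : ℝ} (hs : 0 < s) (n : ℕ) :
    Integrable (fun t => t ^ n * phiR s t) := by
  rw [phiR_eq s hs]
  have hb : (0:ℝ) < (2 * s ^ 2)⁻¹ := by positivity
  have h := (integrable_rpow_mul_exp_neg_mul_sq hb
    (by exact_mod_cast neg_one_lt_zero.trans_le (Nat.cast_nonneg n) : (-1:ℝ) < (n:ℝ))).const_mul
    ((Real.sqrt (2 * π * s ^ 2))⁻¹)
  refine h.congr (Eventually.of_forall fun t => ?_)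
  simp only [Real.rpow_natCast]
  ring

lemma logF_abs_le (hσ2 : 0 < σ2) (μ : Measure ℝ) [IsProbabilityMeasure μ]
    (hsupp : ∀ᵐ x ∂μ, |x| ≤ R) (hR : 0 ≤ R) (y : ℝ) :
    |Real.log (∫ x, phiR σ2 (y - x) ∂μ)|
      ≤ |Real.log (Real.sqrt (2 * π * σ2 ^ 2))⁻¹| + (|y| + R) ^ 2 / (2 * σ2 ^ 2) := by
  set M : ℝ := (Real.sqrt (2 * π * σ2 ^ 2))⁻¹ with hM
  have hMpos : 0 < M := by rw [hM]; positivity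
  have hFpos := F_pos hσ2 hR hsupp y
  have hup : Real.log (∫ x, phiR σ2 (y - x) ∂μ) ≤ Real.log M :=
    Real.log_le_log hFpos (F_upper hσ2 y)
  have hlo : Real.log M - (|y| + R) ^ 2 / (2 * σ2 ^ 2)
      ≤ Real.log (∫ x, phiR σ2 (y - x) ∂μ) := by
    have h1 := Real.log_le_log (phiR_pos hσ2 (|y| + R)) (F_lower hσ2 hR hsupp y)
    have h2 : Real.log (phiR σ2 (|y| + R)) = Real.log M - (|y| + R) ^ 2 / (2 * σ2 ^ 2) := by
      unfold phiR
      rw [Real.log_mul hMpos.ne' (Real.exp_ne_zero _), Real.log_exp]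
      ring
    linarith
  rw [abs_le]
  constructor
  · have := neg_abs_le (Real.log M)
    nlinarith [sq_nonneg (|y| + R)]
  · have := le_abs_self (Real.log M)
    nlinarith [sq_nonneg (|y| + R), div_nonneg (sq_nonneg (|y| + R)) (by positivity : (0:ℝ) ≤ 2 * σ2 ^ 2)]

lemma continuous_logF (hσ2 : 0 < σ2) (μ : Measure ℝ) [IsProbabilityMeasure μ]
    (hsupp : ∀ᵐ x ∂μ, |x| ≤ R) (hR : 0 ≤ R) :
    Continuous (fun y => Real.log (∫ x, phiR σ2 (y - x) ∂μ)) := by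
  rw [continuous_iff_continuousAt]
  exact fun y => (hasDerivAt_logF hσ2 μ hsupp hR y).continuousAt

lemma integrable_g (hσ2 : 0 < σ2) {s : ℝ} (hs : 0 < s) (μ : Measure ℝ) [IsProbabilityMeasure μ]
    (hsupp : ∀ᵐ x ∂μ, |x| ≤ R) (hR : 0 ≤ R) (B : ℝ) :
    Integrable (fun t => t * Real.log (∫ x, phiR σ2 (B + t - x) ∂μ) * phiR s t) := by
  set M : ℝ := (Real.sqrt (2 * π * σ2 ^ 2))⁻¹ with hM
  set C1 : ℝ := |Real.log M| + (|B| + R) ^ 2 / σ2 ^ 2 with hC1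
  set C2 : ℝ := 1 / σ2 ^ 2 with hC2
  have hC1pos : 0 ≤ C1 := by rw [hC1]; positivity
  have hC2pos : 0 ≤ C2 := by rw [hC2]; positivity
  have hbd : Integrable (fun t : ℝ =>
      (C1 + C2) * (1 * phiR s t + t ^ 2 * phiR s t + t ^ 4 * phiR s t)) := by
    refine Integrable.const_mul ?_ _
    exact ((integrable_pow_phi hs 0).congr (Eventually.of_forall fun t => by ring)).add
      (integrable_pow_phi hs 2) |>.add (integrable_pow_phi hs 4)
  refine Integrable.mono' hbd ?_ ?_
  · apply Continuous.aestronglyMeasurable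
    exact (continuous_id.mul ((continuous_logF hσ2 μ hsupp hR).comp
      (continuous_const.add continuous_id))).mul (phiR_continuous s)
  · refine Eventually.of_forall fun t => ?_
    have hφ := phiR_pos hs t
    have hL := logF_abs_le hσ2 μ hsupp hR (B + t)
    rw [Real.norm_eq_abs, abs_mul, abs_mul, abs_of_pos hφ]
    have h1 : (|B + t| + R) ^ 2 ≤ 2 * (|B| + R) ^ 2 + 2 * t ^ 2 := by
      have h2 : |B + t| ≤ |B| + |t| := abs_add_le _ _
      nlinarith [abs_nonneg (B + t), abs_nonneg B, abs_nonneg t, sq_abs t,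
        sq_nonneg (|B| + R - |t|)]
    have h3 : |Real.log (∫ x, phiR σ2 (B + t - x) ∂μ)|
        ≤ |Real.log M| + ((|B| + R) ^ 2 + t ^ 2) / σ2 ^ 2 := by
      refine hL.trans ?_
      have : (|B + t| + R) ^ 2 / (2 * σ2 ^ 2) ≤ ((|B| + R) ^ 2 + t ^ 2) / σ2 ^ 2 := by
        rw [div_le_div_iff₀ (by positivity) (by positivity)]
        nlinarith [sq_nonneg σ2]
      linarith
    have h4 : |t| * |Real.log (∫ x, phiR σ2 (B + t - x) ∂μ)|
        ≤ C1 * |t| + C2 * |t| ^ 3 := by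
      have := mul_le_mul_of_nonneg_left h3 (abs_nonneg t)
      rw [hC1, hC2]
      calc |t| * |Real.log (∫ x, phiR σ2 (B + t - x) ∂μ)|
          ≤ |t| * (|Real.log M| + ((|B| + R) ^ 2 + t ^ 2) / σ2 ^ 2) := this
        _ = (|Real.log M| + (|B| + R) ^ 2 / σ2 ^ 2) * |t| + 1 / σ2 ^ 2 * (|t| * t ^ 2) := by
            field_simp; ring
        _ = (|Real.log M| + (|B| + R) ^ 2 / σ2 ^ 2) * |t| + 1 / σ2 ^ 2 * |t| ^ 3 := by
            rw [← sq_abs t]; ring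
    have h5 : C1 * |t| + C2 * |t| ^ 3 ≤ (C1 + C2) * (1 + t ^ 2 + t ^ 4) := by
      have ht1 : |t| ≤ 1 + t ^ 2 := by nlinarith [abs_nonneg t, sq_abs t, sq_nonneg (|t| - 1)]
      have ht3 : |t| ^ 3 ≤ t ^ 2 + t ^ 4 := by
        nlinarith [abs_nonneg t, sq_abs t, sq_nonneg (|t| - 1), sq_nonneg t]
      nlinarith [sq_nonneg t, sq_nonneg (t ^ 2), sq_nonneg (t * t)]
    calc |t| * |Real.log (∫ x, phiR σ2 (B + t - x) ∂μ)| * phiR s t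
        ≤ (C1 * |t| + C2 * |t| ^ 3) * phiR s t := by
          exact mul_le_mul_of_nonneg_right h4 hφ.le
      _ ≤ ((C1 + C2) * (1 + t ^ 2 + t ^ 4)) * phiR s t := by
          exact mul_le_mul_of_nonneg_right h5 hφ.le
      _ = (C1 + C2) * (1 * phiR s t + t ^ 2 * phiR s t + t ^ 4 * phiR s t) := by ring

end Icore

section Ilower

variable {σ2 R : ℝ} {μ : Measure ℝ}

lemma I_lower (hσ2 : 0 < σ2) {s : ℝ} (hs : 0 < s) (μ : Measure ℝ) [IsProbabilityMeasure μ]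
    (hsupp : ∀ᵐ x ∂μ, |x| ≤ R) (hR : 0 ≤ R) (B : ℝ) :
    -(B + R) * s ^ 2 / σ2 ^ 2
      ≤ ∫ t, t * Real.log (∫ x, phiR σ2 (B + t - x) ∂μ) * phiR s t := by
  set L : ℝ → ℝ := fun y => Real.log (∫ x, phiR σ2 (y - x) ∂μ) with hL
  set g : ℝ → ℝ := fun t => t * L (B + t) * phiR s t with hg
  have hgint : Integrable g := integrable_g hσ2 hs μ hsupp hR B
  have hsplit : ∫ t, g t = (∫ t in Set.Iic (0:ℝ), g t) + ∫ t in Set.Ioi (0:ℝ), g t :=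
    (intervalIntegral.integral_Iic_add_Ioi hgint.integrableOn hgint.integrableOn).symm
  have hneg : ∫ t in Set.Iic (0:ℝ), g t = ∫ t in Set.Ioi (0:ℝ), g (-t) := by
    have := integral_comp_neg_Iic (0:ℝ) (fun u => g (-u))
    simp only [neg_neg, neg_zero] at this
    rw [this]
  have hcomb : ∫ t, g t = ∫ t in Set.Ioi (0:ℝ), (g (-t) + g t) := by
    rw [hsplit, hneg, integral_add (hgint.comp_neg.integrableOn) hgint.integrableOn]
  rw [hcomb]
  have hkey : ∀ t ∈ Set.Ioi (0:ℝ),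
      -(2 * (B + R)) / σ2 ^ 2 * (t ^ 2 * phiR s t) ≤ g (-t) + g t := by
    intro t ht
    have ht' : (0:ℝ) < t := ht
    have hgsum : g (-t) + g t = t * phiR s t * (L (B + t) - L (B - t)) := by
      rw [hg]
      simp only
      rw [phiR_even]
      have : B + -t = B - t := by ring
      rw [this]
      ring
    rw [hgsum]
    have hdiff := logF_diff_lower hσ2 μ hsupp hR (B := B) (t := t) ht'.le
    have htφ : 0 ≤ t * phiR s t := mul_nonneg ht'.le (phiR_pos hs t).le
    calc -(2 * (B + R)) / σ2 ^ 2 * (t ^ 2 * phiR s t)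
        = t * phiR s t * (-(2 * t * (B + R)) / σ2 ^ 2) := by ring
      _ ≤ t * phiR s t * (L (B + t) - L (B - t)) :=
          mul_le_mul_of_nonneg_left hdiff htφ
  have hrhs_int : IntegrableOn (fun t => -(2 * (B + R)) / σ2 ^ 2 * (t ^ 2 * phiR s t))
      (Set.Ioi (0:ℝ)) := ((integrable_pow_phi hs 2).const_mul _).integrableOn
  have hlhs_int : IntegrableOn (fun t => g (-t) + g t) (Set.Ioi (0:ℝ)) :=
    (hgint.comp_neg.integrableOn).add hgint.integrableOn
  have hmono := setIntegral_mono_on hrhs_int hlhs_int measurableSet_Ioi hkey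
  refine le_trans (le_of_eq ?_) hmono
  rw [integral_const_mul, int_Ioi_sq_phi hs]
  field_simp

end Ilower

/-- Lower bound on the maximum modulus of `h̆` on the disk `|z| ≤ B`,
for every `B ≥ R(σ2²+σ1²)/(σ2²−σ1²)`; in particular the maximum modulus is strictly
positive whenever `B > R(σ2²+σ1²)/(σ2²−σ1²)`. -/
theorem hbreve_max_modulus_lower_bound
    (σ1 σ2 R : ℝ) (hσ1 : 0 < σ1) (hσ12 : σ1 < σ2) (hR : 0 < R)
    (μ : Measure ℝ) (hprob : IsProbabilityMeasure μ)
    (hsupp : ∀ᵐ x ∂μ, |x| ≤ R) (hmean : ∫ x, x ∂μ = 0)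
    (B : ℝ) (hB : R * (σ2 ^ 2 + σ1 ^ 2) / (σ2 ^ 2 - σ1 ^ 2) ≤ B) :
    (∃ z : ℂ, ‖z‖ ≤ B ∧
      ((1 - σ1 ^ 2 / σ2 ^ 2) * B - (1 + σ1 ^ 2 / σ2 ^ 2) * R) *
          (Real.exp (-(B + R) ^ 2 / (2 * σ1 ^ 2)) / Real.sqrt (2 * π * σ1 ^ 2)) ≤
        ‖hbreve σ1 σ2 μ z‖) ∧
    (R * (σ2 ^ 2 + σ1 ^ 2) / (σ2 ^ 2 - σ1 ^ 2) < B →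
      ∃ z : ℂ, ‖z‖ ≤ B ∧ 0 < ‖hbreve σ1 σ2 μ z‖) := by
  have hσ2 : 0 < σ2 := hσ1.trans hσ12
  have hs' : 0 < σ2 ^ 2 - σ1 ^ 2 := by nlinarith
  set s : ℝ := Real.sqrt (σ2 ^ 2 - σ1 ^ 2) with hsdef
  have hs : 0 < s := Real.sqrt_pos.mpr hs'
  have hs2 : s ^ 2 = σ2 ^ 2 - σ1 ^ 2 := Real.sq_sqrt hs'.le
  have hRnn : (0:ℝ) ≤ R := hR.le
  have hBpos : 0 < B := lt_of_lt_of_le (by positivity) hB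
  set c : ℝ := (1 - σ1 ^ 2 / σ2 ^ 2) * B - (1 + σ1 ^ 2 / σ2 ^ 2) * R with hc
  have hσ2sq : (0:ℝ) < σ2 ^ 2 := by positivity
  have hc' : c = (B * (σ2 ^ 2 - σ1 ^ 2) - R * (σ2 ^ 2 + σ1 ^ 2)) / σ2 ^ 2 := by
    rw [hc]; field_simp
  have hB' : R * (σ2 ^ 2 + σ1 ^ 2) ≤ B * (σ2 ^ 2 - σ1 ^ 2) := (div_le_iff₀ hs').mp hB
  have hcnn : 0 ≤ c := by
    rw [hc']
    apply div_nonneg (by linarith) hσ2sq.le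
  set F1 : ℝ := ∫ x, phiR σ1 (B - x) ∂μ with hF1
  set J1 : ℝ := ∫ x, x * phiR σ1 (B - x) ∂μ with hJ1
  set IR : ℝ := ∫ t, t * Real.log (∫ x, phiR σ2 (B + t - x) ∂μ) * phiR s t with hIR
  -- hbreve at B is real
  have hmain : hbreve σ1 σ2 μ (B : ℂ)
      = ((σ1 ^ 2 * F1 * IR / (σ2 ^ 2 - σ1 ^ 2) - J1 + B * F1 : ℝ) : ℂ) := by
    unfold hbreve
    have e1 : Fdens σ1 μ (B : ℂ) = ((F1 : ℝ) : ℂ) := Fdens_ofReal σ1 μ B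
    have e2 : ∀ t : ℝ, (t : ℂ) * Complex.log (Fdens σ2 μ ((B:ℂ) + (t:ℂ)))
        * ((phiR s t : ℝ) : ℂ)
        = (((t * Real.log (∫ x, phiR σ2 (B + t - x) ∂μ) * phiR s t : ℝ)) : ℂ) := by
      intro t
      have : ((B:ℂ) + (t:ℂ)) = ((B + t : ℝ) : ℂ) := by push_cast; ring
      rw [this, Fdens_ofReal σ2 μ (B + t),
        ← Complex.ofReal_log (F_pos hσ2 hRnn hsupp (B + t)).le]
      push_cast
      ring
    have e3 : (∫ t : ℝ, (t : ℂ) * Complex.log (Fdens σ2 μ ((B:ℂ) + (t:ℂ)))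
        * ((phiR s t : ℝ) : ℂ)) = ((IR : ℝ) : ℂ) := by
      simp_rw [e2]
      exact integral_ofReal
    have e4 : (∫ x : ℝ, (x : ℂ) * phiC σ1 ((B:ℂ) - (x : ℂ)) ∂μ) = ((J1 : ℝ) : ℂ) := by
      have h : ∀ x : ℝ, (x:ℂ) * phiC σ1 ((B:ℂ) - (x:ℂ))
          = ((x * phiR σ1 (B - x) : ℝ) : ℂ) := fun x => by
        rw [← Complex.ofReal_sub, phiC_ofReal]; push_cast; ring
      simp_rw [h]
      exact integral_ofReal
    rw [e1, ← hsdef, e3, e4]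
    push_cast
    ring
  -- the real lower bound
  have hIlow : -(B + R) * (σ2 ^ 2 - σ1 ^ 2) / σ2 ^ 2 ≤ IR := by
    have := I_lower hσ2 hs μ hsupp hRnn B
    rwa [hs2] at this
  set a' : ℝ := -(σ1 ^ 2) * (B + R) / σ2 ^ 2 with ha'
  have hF1nn : 0 ≤ F1 := (F_pos hσ1 hRnn hsupp B).le
  have hterm1 : a' * F1 ≤ σ1 ^ 2 * F1 * IR / (σ2 ^ 2 - σ1 ^ 2) := by
    have h0 : σ1 ^ 2 * F1 * IR / (σ2 ^ 2 - σ1 ^ 2)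
        = (σ1 ^ 2 * F1 / (σ2 ^ 2 - σ1 ^ 2)) * IR := by ring
    have h1 : 0 ≤ σ1 ^ 2 * F1 / (σ2 ^ 2 - σ1 ^ 2) := by positivity
    have h2 := mul_le_mul_of_nonneg_left hIlow h1
    rw [h0]
    refine le_trans (le_of_eq ?_) h2
    rw [ha']
    field_simp
  have hcomb : a' * F1 - J1 + B * F1 = ∫ x, (B + a' - x) * phiR σ1 (B - x) ∂μ := by
    have hint1 : Integrable (fun x => (B + a') * phiR σ1 (B - x)) μ :=
      (integrable_phiR_shift hσ1 μ B).const_mul _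
    have hint2 : Integrable (fun x => x * phiR σ1 (B - x)) μ :=
      integrable_mul_phiR_shift hσ1 μ hsupp B
    have : (∫ x, (B + a' - x) * phiR σ1 (B - x) ∂μ)
        = (∫ x, (B + a') * phiR σ1 (B - x) ∂μ) - ∫ x, x * phiR σ1 (B - x) ∂μ := by
      rw [← integral_sub hint1 hint2]
      congr 1; funext x; ring
    rw [this, integral_const_mul, ← hF1, ← hJ1]
    ring
  have hptwise : ∀ᵐ x ∂μ, c * phiR σ1 (B + R) ≤ (B + a' - x) * phiR σ1 (B - x) := by
    filter_upwards [hsupp] with x hx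
    have hxR := abs_le.mp hx
    have hcoef : c ≤ B + a' - x := by
      rw [hc, ha']
      have hσ2sq : (0:ℝ) < σ2 ^ 2 := by positivity
      have : (1 - σ1 ^ 2 / σ2 ^ 2) * B - (1 + σ1 ^ 2 / σ2 ^ 2) * R
          = B + -(σ1 ^ 2) * (B + R) / σ2 ^ 2 - R := by field_simp; ring
      rw [this]
      linarith [hxR.2]
    have hφ : phiR σ1 (B + R) ≤ phiR σ1 (B - x) := by
      refine phiR_anti hσ1 ?_
      rw [← sq_abs (B - x), ← sq_abs (B + R)]
      have h1 : |B - x| ≤ B + R := by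
        rw [abs_le]; constructor <;> linarith [hxR.1, hxR.2]
      have h2 : |B + R| = B + R := abs_of_pos (by linarith)
      rw [h2]
      exact pow_le_pow_left₀ (abs_nonneg _) h1 2
    exact mul_le_mul hcoef hφ (phiR_pos hσ1 _).le (le_trans hcnn hcoef)
  have hintmono : c * phiR σ1 (B + R) ≤ ∫ x, (B + a' - x) * phiR σ1 (B - x) ∂μ := by
    have hconst : c * phiR σ1 (B + R) = ∫ _x, c * phiR σ1 (B + R) ∂μ := by
      rw [integral_const]; simp
    rw [hconst]
    refine integral_mono_ae (integrable_const _) ?_ hptwise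
    have hint1 : Integrable (fun x => (B + a') * phiR σ1 (B - x)) μ :=
      (integrable_phiR_shift hσ1 μ B).const_mul _
    have hint2 : Integrable (fun x => x * phiR σ1 (B - x)) μ :=
      integrable_mul_phiR_shift hσ1 μ hsupp B
    refine (hint1.sub hint2).congr (Eventually.of_forall fun x => ?_)
    simp only [Pi.sub_apply]; ring
  have hfinal : c * phiR σ1 (B + R) ≤ ‖hbreve σ1 σ2 μ (B : ℂ)‖ := by
    rw [hmain, Complex.norm_real, Real.norm_eq_abs]
    refine le_trans ?_ (le_abs_self _)
    calc c * phiR σ1 (B + R) ≤ ∫ x, (B + a' - x) * phiR σ1 (B - x) ∂μ := hintmono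
      _ = a' * F1 - J1 + B * F1 := hcomb.symm
      _ ≤ σ1 ^ 2 * F1 * IR / (σ2 ^ 2 - σ1 ^ 2) - J1 + B * F1 := by linarith [hterm1]
  have hphi_eq : phiR σ1 (B + R)
      = Real.exp (-(B + R) ^ 2 / (2 * σ1 ^ 2)) / Real.sqrt (2 * π * σ1 ^ 2) := by
    unfold phiR
    rw [inv_mul_eq_div]
  constructor
  · refine ⟨(B : ℂ), ?_, ?_⟩
    · rw [Complex.norm_real, Real.norm_eq_abs, abs_of_pos hBpos]
    · rw [← hphi_eq]
      exact hfinal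
  · intro hlt
    refine ⟨(B : ℂ), ?_, ?_⟩
    · rw [Complex.norm_real, Real.norm_eq_abs, abs_of_pos hBpos]
    · have hlt' : R * (σ2 ^ 2 + σ1 ^ 2) < B * (σ2 ^ 2 - σ1 ^ 2) := (div_lt_iff₀ hs').mp hlt
      have hcpos : 0 < c := by
        rw [hc']
        exact div_pos (by linarith) hσ2sq
      exact lt_of_lt_of_le (mul_pos hcpos (phiR_pos hσ1 _)) hfinal
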